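/- Assume each Ĵ_i is bounded from below and define the ideal point y^id ∈ ℝ^k by y^id_i := inf_{u ∈ U_ad} Ĵ_i(u). Fix d̃ ∈ ℝ^k with d̃ > 0, set ỹ^id := y^id − d̃, let D_i := {y ∈ ℝ^k : y ≥ ỹ^id and y_i = ỹ^id_i}, D := ⋃_{i=1}^k D_i, and for y ∈ ℝ^k set t^D(y) := min_{1≤i≤k} (y_i − ỹ^id_i)/r_i. Then the set {z ∈ D : ∃ ū ∈ U_ad Pareto optimal and ∃ t ∈ ℝ with z = Ĵ(ū) − t r} equals the set {Ĵ(ū) − t^D(Ĵ(ū)) r : ū ∈ U_ad Pareto optimal}. -/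
import Mathlib


/-- **Characterization of the Pareto sufficient reference set `𝒵^D_opt`.**
Assume each `J_i` is bounded from below on `Uad` and let `yid` be the ideal point,
`yid_i = inf_{u ∈ Uad} J_i(u)`.  Fix `dt > 0`, let the shifted ideal point be
`yid − dt`, let `D = ⋃_i D_i` with
`D_i = {y : y ≥ yid − dt, y_i = yid_i − dt_i}`, and for `y ∈ ℝ^k` set
`t^D(y) = min_i (y_i − (yid_i − dt_i))/r_i`.  Then
`{z ∈ D : ∃ Pareto optimal ubar ∈ Uad, ∃ t ∈ ℝ, z = J(ubar) − t r}`
equals `{J(ubar) − t^D(J(ubar)) r : ubar ∈ Uad Pareto optimal}`. -/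
theorem reference_set_characterization
    {U : Type*} [NormedAddCommGroup U] [InnerProductSpace ℝ U] [CompleteSpace U]
    {k : ℕ} (hk : 2 ≤ k) (Uad : Set U) (hUad : Uad.Nonempty)
    (J : U → Fin k → ℝ)
    (hbelow : ∀ i, ∃ c : ℝ, ∀ u ∈ Uad, c ≤ J u i)
    (r : Fin k → ℝ) (hr : ∀ i, 0 < r i)
    (dt : Fin k → ℝ) (hdt : ∀ i, 0 < dt i)
    (yid : Fin k → ℝ) (hyid : ∀ i, yid i = sInf ((fun u => J u i) '' Uad)) :
    {zz : Fin k → ℝ |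
        ((∀ i, yid i - dt i ≤ zz i) ∧ ∃ i, zz i = yid i - dt i) ∧
        ∃ ubar ∈ Uad, (∀ ut ∈ Uad, ¬ (J ut ≤ J ubar ∧ J ut ≠ J ubar)) ∧
          ∃ t : ℝ, zz = fun i => J ubar i - t * r i} =
      {w : Fin k → ℝ | ∃ ubar ∈ Uad,
        (∀ ut ∈ Uad, ¬ (J ut ≤ J ubar ∧ J ut ≠ J ubar)) ∧
        w = fun i => J ubar i -
          (Finset.univ.inf' (Finset.univ_nonempty_iff.mpr ⟨⟨0, by omega⟩⟩)
            fun j => (J ubar j - (yid j - dt j)) / r j) * r i} := by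
  have hne : (Finset.univ : Finset (Fin k)).Nonempty :=
    Finset.univ_nonempty_iff.mpr ⟨⟨0, by omega⟩⟩
  ext zz
  simp only [Set.mem_setOf_eq]
  constructor
  · rintro ⟨⟨hge, i0, hi0⟩, ubar, hub, hpar, t, rfl⟩
    refine ⟨ubar, hub, hpar, ?_⟩
    have ht : t = Finset.univ.inf' hne fun j => (J ubar j - (yid j - dt j)) / r j := by
      have hle : t ≤ Finset.univ.inf' hne fun j => (J ubar j - (yid j - dt j)) / r j := by
        apply Finset.le_inf'
        intro j _
        have := hge j
        dsimp only at this
        rw [le_div_iff₀ (hr j)]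
        linarith
      have hge2 : (Finset.univ.inf' hne fun j => (J ubar j - (yid j - dt j)) / r j) ≤ t := by
        refine le_trans (Finset.inf'_le _ (Finset.mem_univ i0)) ?_
        rw [div_le_iff₀ (hr i0)]
        have := hi0
        dsimp only at this
        linarith
      linarith
    rw [ht]
  · rintro ⟨ubar, hub, hpar, rfl⟩
    set T := Finset.univ.inf' hne fun j => (J ubar j - (yid j - dt j)) / r j with hT
    refine ⟨⟨?_, ?_⟩, ubar, hub, hpar, T, rfl⟩
    · intro i
      have := Finset.inf'_le (f := fun j => (J ubar j - (yid j - dt j)) / r j)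
        (Finset.mem_univ i)
      rw [← hT] at this
      have h2 : T * r i ≤ J ubar i - (yid i - dt i) := by
        rw [← le_div_iff₀ (hr i)]; exact this
      dsimp only
      linarith
    · obtain ⟨j, _, hj⟩ := Finset.exists_mem_eq_inf' hne
        fun j => (J ubar j - (yid j - dt j)) / r j
      refine ⟨j, ?_⟩
      rw [← hT] at hj
      show J ubar j - T * r j = yid j - dt j
      rw [hj, div_mul_cancel₀ _ (ne_of_gt (hr j))]
      ring
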